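/- Algebraic extensions yield deontic action algebras: if Φ is a ⊢-consistent set of DAL formulas, Δ is a set of basic deontic defaults, and (P, F) is an algebraic extension of Φ under Δ, then the triple ⟨A_Φ, P, F⟩ is a deontic action algebra; in particular P ∩ F = {[0]_Φ}. -/

import Mathlib

namespace DAL

/-- Actions of DAL over a countable set of basic action symbols. -/
inductive Act : Type where
  | basic : ℕ → Act
  | join : Act → Act → Act
  | meet : Act → Act → Act
  | compl : Act → Act
  | zero : Act
  | one : Act

/-- Formulas of DAL. -/
inductive Fml : Type where
  | neg : Fml → Fml
  | or : Fml → Fml → Fml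
  | eq : Act → Act → Fml
  | perm : Act → Fml
  | forb : Act → Fml

/-- Material implication, defined from ¬ and ∨. -/
def fImp (p q : Fml) : Fml := .or (.neg p) q
/-- Conjunction, defined from ¬ and ∨. -/
def fAnd (p q : Fml) : Fml := .neg (.or (.neg p) (.neg q))
/-- Biconditional. -/
def fIff (p q : Fml) : Fml := fAnd (fImp p q) (fImp q p)
/-- Verum. -/
def fTop : Fml := .or (.eq .zero .zero) (.neg (.eq .zero .zero))
/-- Falsum. -/
def fBot : Fml := .neg fTop

/-- `ARepl a b γ γ'` : γ' is obtained from γ by replacing some (possibly zero)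
occurrences of the action `a` with the action `b`. -/
inductive ARepl (a b : Act) : Act → Act → Prop where
  | repl : ARepl a b a b
  | basic (n : ℕ) : ARepl a b (.basic n) (.basic n)
  | zero : ARepl a b .zero .zero
  | one : ARepl a b .one .one
  | join {x x' y y'} : ARepl a b x x' → ARepl a b y y' → ARepl a b (.join x y) (.join x' y')
  | meet {x x' y y'} : ARepl a b x x' → ARepl a b y y' → ARepl a b (.meet x y) (.meet x' y')
  | compl {x x'} : ARepl a b x x' → ARepl a b (.compl x) (.compl x')

/-- `FRepl a b φ φ'` : φ' is obtained from φ by replacing some (possibly zero)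
occurrences of the action `a` with the action `b`. -/
inductive FRepl (a b : Act) : Fml → Fml → Prop where
  | neg {p p'} : FRepl a b p p' → FRepl a b (.neg p) (.neg p')
  | or {p p' q q'} : FRepl a b p p' → FRepl a b q q' → FRepl a b (.or p q) (.or p' q')
  | eq {x x' y y'} : ARepl a b x x' → ARepl a b y y' → FRepl a b (.eq x y) (.eq x' y')
  | perm {x x'} : ARepl a b x x' → FRepl a b (.perm x) (.perm x')
  | forb {x x'} : ARepl a b x x' → FRepl a b (.forb x) (.forb x')

/-- The axioms of the Hilbert system for DAL: a complete classical axiomatization of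
¬, ∨; Boolean algebra axioms for actions plus ¬(0=1); equality and substitution
axioms; and the deontic axioms D1, D2, D3. -/
inductive Ax : Fml → Prop where
  -- classical axioms for ¬ and ∨ (Principia Mathematica style)
  | pl1 (p : Fml) : Ax (fImp (.or p p) p)
  | pl2 (p q : Fml) : Ax (fImp p (.or p q))
  | pl3 (p q : Fml) : Ax (fImp (.or p q) (.or q p))
  | pl4 (p q r : Fml) : Ax (fImp (fImp p q) (fImp (.or r p) (.or r q)))
  -- Boolean algebra axioms for actions
  | joinComm (x y : Act) : Ax (.eq (.join x y) (.join y x))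
  | meetComm (x y : Act) : Ax (.eq (.meet x y) (.meet y x))
  | joinAssoc (x y z : Act) : Ax (.eq (.join x (.join y z)) (.join (.join x y) z))
  | meetAssoc (x y z : Act) : Ax (.eq (.meet x (.meet y z)) (.meet (.meet x y) z))
  | joinDistrib (x y z : Act) : Ax (.eq (.join x (.meet y z)) (.meet (.join x y) (.join x z)))
  | meetDistrib (x y z : Act) : Ax (.eq (.meet x (.join y z)) (.join (.meet x y) (.meet x z)))
  | joinZero (x : Act) : Ax (.eq (.join x .zero) x)
  | meetOne (x : Act) : Ax (.eq (.meet x .one) x)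
  | joinCompl (x : Act) : Ax (.eq (.join x (.compl x)) .one)
  | meetCompl (x : Act) : Ax (.eq (.meet x (.compl x)) .zero)
  | nondeg : Ax (.neg (.eq .zero .one))
  -- equality axioms
  | eqRefl (x : Act) : Ax (.eq x x)
  | eqSymm (x y : Act) : Ax (fImp (.eq x y) (.eq y x))
  | eqTrans (x y z : Act) : Ax (fImp (.eq x y) (fImp (.eq y z) (.eq x z)))
  -- substitution axiom
  | subst {x y : Act} {p q : Fml} : FRepl x y p q → Ax (fImp (.eq x y) (fImp p q))
  -- deontic axioms
  | d1 (x y : Act) : Ax (fIff (.perm (.join x y)) (fAnd (.perm x) (.perm y)))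
  | d2 (x y : Act) : Ax (fIff (.forb (.join x y)) (fAnd (.forb x) (.forb y)))
  | d3 (x : Act) : Ax (fIff (.eq x .zero) (fAnd (.perm x) (.forb x)))

/-- `IsProof Φ s` : the finite sequence (list) `s` is a proof from `Φ`: every member
is an axiom, a member of `Φ`, or follows from two earlier members by modus ponens. -/
def IsProof (Φ : Set Fml) (s : List Fml) : Prop :=
  ∀ (k : ℕ) (hk : k < s.length),
    Ax (s[k]'hk) ∨ (s[k]'hk) ∈ Φ ∨
      ∃ (i j : ℕ) (hi : i < k) (hj : j < k),
        s[j]'(Nat.lt_trans hj hk) = fImp (s[i]'(Nat.lt_trans hi hk)) (s[k]'hk)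

/-- `Prov Φ φ` (Φ ⊢ φ) : there is a proof of φ from Φ. -/
def Prov (Φ : Set Fml) (φ : Fml) : Prop :=
  ∃ s : List Fml, IsProof Φ s ∧ s.getLast? = some φ

/-- Φ is ⊢-consistent. -/
def Consistent (Φ : Set Fml) : Prop := ¬ Prov Φ fBot

/-- Deductive closure. -/
def Cn (Ψ : Set Fml) : Set Fml := {φ | Prov Ψ φ}

end DAL

namespace DAL

/-- A default π:ρ/χ with prerequisite, justification, and consequent. -/
structure Default : Type where
  pre : Fml
  jus : Fml
  con : Fml

/-- A default is normal iff its justification equals its consequent. -/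
def Default.Normal (d : Default) : Prop := d.jus = d.con

/-- The operator Γ^Φ_Δ : `GammaSet Φ Δ Ψ` is the smallest set `X` of formulas such
that (i) Φ ⊆ X, (ii) X is deductively closed, and (iii) for each default π:ρ/χ in Δ,
if π ∈ X and ¬ρ ∉ Ψ then χ ∈ X. -/
def GammaSet (Φ : Set Fml) (Δ : Set Default) (Ψ : Set Fml) : Set Fml :=
  ⋂₀ {X | Φ ⊆ X ∧ X = Cn X ∧ ∀ d ∈ Δ, d.pre ∈ X → Fml.neg d.jus ∉ Ψ → d.con ∈ X}

/-- `E` is a Reiter extension of Φ under Δ iff it is a fixed point of Γ^Φ_Δ. -/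
def IsExtension (Φ : Set Fml) (Δ : Set Default) (E : Set Fml) : Prop :=
  E = GammaSet Φ Δ E

/-- Default consequence (Φ |≈_Δ φ): some Reiter extension E of Φ under Δ
satisfies E ⊢ φ. -/
def DCons (Φ : Set Fml) (Δ : Set Default) (φ : Fml) : Prop :=
  ∃ E, IsExtension Φ Δ E ∧ Prov E φ

/-- One step of a default proof: an axiom, a member of Φ, modus ponens from two
earlier members, or default detachment from an earlier member. -/
def DProofStep (Φ : Set Fml) (Δ : Set Default) (s : List Fml) (k : ℕ) (hk : k < s.length) : Prop :=
  Ax (s[k]'hk) ∨ (s[k]'hk) ∈ Φ ∨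
    (∃ (i j : ℕ) (hi : i < k) (hj : j < k),
      s[j]'(Nat.lt_trans hj hk) = fImp (s[i]'(Nat.lt_trans hi hk)) (s[k]'hk)) ∨
    (∃ (j : ℕ) (hj : j < k),
      (⟨s[j]'(Nat.lt_trans hj hk), s[k]'hk, s[k]'hk⟩ : Default) ∈ Δ)

/-- Default provability (Φ ⊢_Δ φ): there is a finite sequence ψ₁,…,ψₙ with ψₙ = φ,
each member an axiom, a member of Φ, obtained by modus ponens, or obtained by
default detachment, such that {ψ₁,…,ψₙ} is ⊢-consistent. -/
def DProv (Φ : Set Fml) (Δ : Set Default) (φ : Fml) : Prop :=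
  ∃ s : List Fml,
    (∀ (k : ℕ) (hk : k < s.length), DProofStep Φ Δ s k hk) ∧
    s.getLast? = some φ ∧
    Consistent {ψ | ψ ∈ s}

end DAL

namespace DAL

/-- The elements of the Lindenbaum-Tarski algebra A_Φ are represented by
≡_Φ-saturated sets of actions; `zeroClass Φ` represents the singleton {[0]_Φ}. -/
def zeroClass (Φ : Set Fml) : Set Act := {α | Prov Φ (.eq α .zero)}

/-- An ideal of the Lindenbaum-Tarski algebra A_Φ, represented as a ≡_Φ-saturated
set of actions closed under ⊔ and closed under ⊓ with arbitrary actions. -/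
def IsIdealLT (Φ : Set Fml) (I : Set Act) : Prop :=
  (∀ α β : Act, Prov Φ (.eq α β) → α ∈ I → β ∈ I) ∧
  (∀ α ∈ I, ∀ β ∈ I, Act.join α β ∈ I) ∧
  (∀ α ∈ I, ∀ β : Act, Act.meet α β ∈ I)

/-- The ideal of A_Φ generated by a set: the intersection of all ideals containing it. -/
def genIdealLT (Φ : Set Fml) (B : Set Act) : Set Act :=
  ⋂₀ {I : Set Act | IsIdealLT Φ I ∧ B ⊆ I}

/-- P_{A_Φ}: the smallest ideal of A_Φ containing [α]_Φ whenever Φ ⊢ P(α). -/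
def PIdeal (Φ : Set Fml) : Set Act :=
  ⋂₀ {I : Set Act | IsIdealLT Φ I ∧ ∀ α : Act, Prov Φ (.perm α) → α ∈ I}

/-- F_{A_Φ}: the smallest ideal of A_Φ containing [α]_Φ whenever Φ ⊢ F(α). -/
def FIdeal (Φ : Set Fml) : Set Act :=
  ⋂₀ {I : Set Act | IsIdealLT Φ I ∧ ∀ α : Act, Prov Φ (.forb α) → α ∈ I}

/-- The Boolean order of A_Φ: [β]_Φ ⊑ [α]_Φ iff [β]_Φ = [β]_Φ · [α]_Φ. -/
def leLT (Φ : Set Fml) (β α : Act) : Prop := Prov Φ (.eq β (.meet β α))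

/-- The deontic dual P⁰ of P_{A_Φ}. -/
def dualP (Φ : Set Fml) : Set Act :=
  {β | ∃ α : Act, Prov Φ (.neg (.perm α)) ∧ leLT Φ β α} \ PIdeal Φ

/-- The deontic dual F⁰ of F_{A_Φ}. -/
def dualF (Φ : Set Fml) : Set Act :=
  {β | ∃ α : Act, Prov Φ (.neg (.forb α)) ∧ leLT Φ β α} \ FIdeal Φ

/-- [α]_Φ ≼ P⁰: some [β]_Φ ⊑ [α]_Φ lies in P⁰. -/
def precP (Φ : Set Fml) (α : Act) : Prop := ∃ β : Act, leLT Φ β α ∧ β ∈ dualP Φ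

/-- [α]_Φ ≼ F⁰: some [β]_Φ ⊑ [α]_Φ lies in F⁰. -/
def precF (Φ : Set Fml) (α : Act) : Prop := ∃ β : Act, leLT Φ β α ∧ β ∈ dualF Φ

/-- A set of defaults consists of basic deontic defaults only: each default has the
form P(α):P(β)/P(β) or F(α):F(β)/F(β). -/
def BasicDeonticSet (Δ : Set Default) : Prop :=
  ∀ d ∈ Δ, ∃ α β : Act,
    d = ⟨Fml.perm α, Fml.perm β, Fml.perm β⟩ ∨ d = ⟨Fml.forb α, Fml.forb β, Fml.forb β⟩

/-- The conditions (i)-(iii) that the output pair (P′, F′) of the operator E^Δ_Φ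
must satisfy. -/
def EConds (Φ : Set Fml) (Δ : Set Default) (P' F' : Set Act) : Prop :=
  IsIdealLT Φ P' ∧ IsIdealLT Φ F' ∧
  PIdeal Φ ⊆ P' ∧ FIdeal Φ ⊆ F' ∧
  (∀ α β : Act, (⟨Fml.perm α, Fml.perm β, Fml.perm β⟩ : Default) ∈ Δ →
    α ∈ P' → genIdealLT Φ (P' ∪ {β}) ∩ F' = zeroClass Φ → ¬ precP Φ β → β ∈ P') ∧
  (∀ α β : Act, (⟨Fml.forb α, Fml.forb β, Fml.forb β⟩ : Default) ∈ Δ →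
    α ∈ F' → genIdealLT Φ (F' ∪ {β}) ∩ P' = zeroClass Φ → ¬ precF Φ β → β ∈ F')

/-- The operator E^Δ_Φ as a relation: `EOpRel Φ Δ (P, F) (P', F')` holds iff
(P', F') is the (componentwise) smallest pair of ideals satisfying conditions
(i)-(iii), i.e. E^Δ_Φ(P, F) = (P', F'). -/
def EOpRel (Φ : Set Fml) (Δ : Set Default) :
    Set Act × Set Act → Set Act × Set Act → Prop :=
  fun _ out =>
    EConds Φ Δ out.1 out.2 ∧ ∀ Q G : Set Act, EConds Φ Δ Q G → out.1 ⊆ Q ∧ out.2 ⊆ G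

/-- (P, F) is an algebraic extension of Φ under Δ iff it is a fixed point of E^Δ_Φ. -/
def AlgExt (Φ : Set Fml) (Δ : Set Default) (P F : Set Act) : Prop :=
  EOpRel Φ Δ (P, F) (P, F)

/-- Satisfaction in the deontic action algebra ⟨A_Φ, P, F⟩ under the canonical
valuation I_Φ(a) = [a]_Φ, with ideals of A_Φ represented as saturated sets of
actions. -/
def SatLT (Φ : Set Fml) (P F : Set Act) : Fml → Prop
  | .neg φ => ¬ SatLT Φ P F φ
  | .or φ ψ => SatLT Φ P F φ ∨ SatLT Φ P F ψ
  | .eq α β => Prov Φ (.eq α β)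
  | .perm α => α ∈ P
  | .forb α => α ∈ F

end DAL

namespace DAL

variable {Φ : Set Fml}

/-! ### Basic facts about provability -/

lemma prov_ax {p : Fml} (h : Ax p) : Prov Φ p := by
  refine ⟨[p], ?_, by simp⟩
  intro k hk
  have hk0 : k = 0 := by simpa using hk
  subst hk0
  exact Or.inl h

lemma getElem_idx_congr {α : Type*} {l : List α} {i j : ℕ} (h : i = j)
    (hi : i < l.length) : l[i]'hi = l[j]'(h ▸ hi) := by subst h; rfl

lemma prov_mp {p q : Fml} (h1 : Prov Φ (fImp p q)) (h2 : Prov Φ p) : Prov Φ q := by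
  obtain ⟨s1, hs1, e1⟩ := h1
  obtain ⟨s2, hs2, e2⟩ := h2
  rw [List.getLast?_eq_getElem?] at e1 e2
  obtain ⟨hl1, he1⟩ := List.getElem?_eq_some_iff.mp e1
  obtain ⟨hl2, he2⟩ := List.getElem?_eq_some_iff.mp e2
  have hn1 : 1 ≤ s1.length := by omega
  have hn2 : 1 ≤ s2.length := by omega
  refine ⟨s1 ++ s2 ++ [q], ?_, List.getLast?_concat⟩
  have hlen : (s1 ++ s2 ++ [q]).length = s1.length + s2.length + 1 := by simp; omega
  have E1 : ∀ (i : ℕ) (h : i < s1.length),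
      (s1 ++ s2 ++ [q])[i]'(by simp; omega) = s1[i]'h := by
    intro i h
    rw [List.getElem_append_left (show i < (s1 ++ s2).length by simp; omega),
      List.getElem_append_left h]
  have E2 : ∀ (i : ℕ) (h : i < s2.length),
      (s1 ++ s2 ++ [q])[s1.length + i]'(by simp; omega) = s2[i]'h := by
    intro i h
    rw [List.getElem_append_left (show s1.length + i < (s1 ++ s2).length by simp; omega),
      List.getElem_append_right (show s1.length ≤ s1.length + i by omega)]
    exact getElem_idx_congr (by omega) _
  have E3 : (s1 ++ s2 ++ [q])[s1.length + s2.length]'(by simp) = q := by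
    rw [List.getElem_append_right (show (s1 ++ s2).length ≤ s1.length + s2.length by simp)]
    simp
  intro k hk
  rw [hlen] at hk
  rcases Nat.lt_or_ge k s1.length with hc1 | hc1
  · rcases hs1 k hc1 with h | h | ⟨i, j, hi, hj, hij⟩
    · exact Or.inl (by rw [E1 k hc1]; exact h)
    · exact Or.inr (Or.inl (by rw [E1 k hc1]; exact h))
    · refine Or.inr (Or.inr ⟨i, j, hi, hj, ?_⟩)
      rw [E1 k hc1, E1 i (by omega), E1 j (by omega)]
      exact hij
  · rcases Nat.lt_or_ge k (s1.length + s2.length) with hc2 | hc2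
    · have hk' : k - s1.length < s2.length := by omega
      have Ek : (s1 ++ s2 ++ [q])[k]'(by simp; omega) = s2[k - s1.length]'hk' :=
        (getElem_idx_congr (show k = s1.length + (k - s1.length) by omega) _).trans
          (E2 _ hk')
      rcases hs2 (k - s1.length) hk' with h | h | ⟨i, j, hi, hj, hij⟩
      · exact Or.inl (by rw [Ek]; exact h)
      · exact Or.inr (Or.inl (by rw [Ek]; exact h))
      · refine Or.inr (Or.inr ⟨s1.length + i, s1.length + j, by omega, by omega, ?_⟩)
        rw [Ek, E2 i (by omega), E2 j (by omega)]
        exact hij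
    · have hkeq : k = s1.length + s2.length := by omega
      refine Or.inr (Or.inr ⟨s1.length + (s2.length - 1), s1.length - 1, by omega, by omega, ?_⟩)
      have Ek : (s1 ++ s2 ++ [q])[k]'(by simp; omega) = q :=
        (getElem_idx_congr hkeq _).trans E3
      rw [Ek, E1 (s1.length - 1) (by omega), E2 (s2.length - 1) (by omega)]
      rw [he1, he2]

/-! ### Propositional lemmas in the Hilbert system -/

lemma prov_syll {p q r : Fml} (h1 : Prov Φ (fImp p q)) (h2 : Prov Φ (fImp q r)) :
    Prov Φ (fImp p r) :=
  prov_mp (prov_mp (prov_ax (Ax.pl4 q r (.neg p))) h2) h1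

lemma prov_imp_refl (p : Fml) : Prov Φ (fImp p p) :=
  prov_syll (prov_ax (Ax.pl2 p p)) (prov_ax (Ax.pl1 p))

lemma prov_lem (p : Fml) : Prov Φ (.or p (.neg p)) :=
  prov_mp (prov_ax (Ax.pl3 (.neg p) p)) (prov_imp_refl p)

lemma prov_dn1 (p : Fml) : Prov Φ (fImp p (.neg (.neg p))) :=
  prov_mp (prov_ax (Ax.pl3 (.neg (.neg p)) (.neg p))) (prov_imp_refl (.neg p))

lemma prov_dn2 (p : Fml) : Prov Φ (fImp (.neg (.neg p)) p) :=
  prov_mp (prov_ax (Ax.pl3 p (.neg (.neg (.neg p)))))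
    (prov_mp (prov_mp (prov_ax (Ax.pl4 (.neg p) (.neg (.neg (.neg p))) p))
      (prov_dn1 (.neg p))) (prov_lem p))

lemma prov_contra {p q : Fml} (h : Prov Φ (fImp p q)) :
    Prov Φ (fImp (.neg q) (.neg p)) :=
  prov_mp (prov_ax (Ax.pl3 (.neg p) (.neg (.neg q)))) (prov_syll h (prov_dn1 q))

lemma prov_and_left {p q : Fml} (h : Prov Φ (fAnd p q)) : Prov Φ p :=
  prov_mp (prov_syll (prov_contra (prov_ax (Ax.pl2 (.neg p) (.neg q)))) (prov_dn2 p)) h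

lemma prov_and_right {p q : Fml} (h : Prov Φ (fAnd p q)) : Prov Φ q :=
  prov_mp (prov_syll (prov_contra (prov_syll (prov_ax (Ax.pl2 (.neg q) (.neg p)))
    (prov_ax (Ax.pl3 (.neg q) (.neg p))))) (prov_dn2 q)) h

lemma prov_and_intro {p q : Fml} (hp : Prov Φ p) (hq : Prov Φ q) : Prov Φ (fAnd p q) := by
  have hnnp : Prov Φ (.neg (.neg p)) := prov_mp (prov_dn1 p) hp
  have h1 : Prov Φ (fImp (.neg p) (.neg q)) :=
    prov_mp (prov_ax (Ax.pl2 (.neg (.neg p)) (.neg q))) hnnp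
  have h2 : Prov Φ (fImp (.or (.neg q) (.neg p)) (.or (.neg q) (.neg q))) :=
    prov_mp (prov_ax (Ax.pl4 (.neg p) (.neg q) (.neg q))) h1
  have h3 : Prov Φ (fImp (.or (.neg p) (.neg q)) (.neg q)) :=
    prov_syll (prov_ax (Ax.pl3 (.neg p) (.neg q))) (prov_syll h2 (prov_ax (Ax.pl1 (.neg q))))
  exact prov_mp (prov_contra h3) (prov_mp (prov_dn1 q) hq)

lemma prov_iff_mp {p q : Fml} (h : Prov Φ (fIff p q)) (hp : Prov Φ p) : Prov Φ q :=
  prov_mp (prov_and_left h) hp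

lemma prov_iff_mpr {p q : Fml} (h : Prov Φ (fIff p q)) (hq : Prov Φ q) : Prov Φ p :=
  prov_mp (prov_and_right h) hq

lemma prov_bot {p : Fml} (hp : Prov Φ p) (hnp : Prov Φ (.neg p)) : Prov Φ fBot :=
  prov_mp (prov_mp (prov_ax (Ax.pl2 (.neg p) fBot)) hnp) hp

/-! ### Equational lemmas -/

lemma eq_refl' (x : Act) : Prov Φ (.eq x x) := prov_ax (Ax.eqRefl x)

lemma eq_symm' {x y : Act} (h : Prov Φ (.eq x y)) : Prov Φ (.eq y x) :=
  prov_mp (prov_ax (Ax.eqSymm x y)) h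

lemma eq_trans' {x y z : Act} (h1 : Prov Φ (.eq x y)) (h2 : Prov Φ (.eq y z)) :
    Prov Φ (.eq x z) :=
  prov_mp (prov_mp (prov_ax (Ax.eqTrans x y z)) h1) h2

lemma arepl_refl (a b x : Act) : ARepl a b x x := by
  induction x with
  | basic n => exact .basic n
  | join x y ihx ihy => exact .join ihx ihy
  | meet x y ihx ihy => exact .meet ihx ihy
  | compl x ihx => exact .compl ihx
  | zero => exact .zero
  | one => exact .one

lemma prov_subst {x y : Act} {p q : Fml} (hr : FRepl x y p q)
    (hxy : Prov Φ (.eq x y)) (hp : Prov Φ p) : Prov Φ q :=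
  prov_mp (prov_mp (prov_ax (Ax.subst hr)) hxy) hp

lemma meet_congr_l {x y : Act} (z : Act) (h : Prov Φ (.eq x y)) :
    Prov Φ (.eq (.meet x z) (.meet y z)) :=
  prov_subst (.eq (arepl_refl x y _) (.meet .repl (arepl_refl x y z))) h (eq_refl' _)

lemma meet_congr_r (z : Act) {x y : Act} (h : Prov Φ (.eq x y)) :
    Prov Φ (.eq (.meet z x) (.meet z y)) :=
  prov_subst (.eq (arepl_refl x y _) (.meet (arepl_refl x y z) .repl)) h (eq_refl' _)

lemma join_congr_l {x y : Act} (z : Act) (h : Prov Φ (.eq x y)) :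
    Prov Φ (.eq (.join x z) (.join y z)) :=
  prov_subst (.eq (arepl_refl x y _) (.join .repl (arepl_refl x y z))) h (eq_refl' _)

lemma join_congr_r (z : Act) {x y : Act} (h : Prov Φ (.eq x y)) :
    Prov Φ (.eq (.join z x) (.join z y)) :=
  prov_subst (.eq (arepl_refl x y _) (.join (arepl_refl x y z) .repl)) h (eq_refl' _)

lemma idem_meet (x : Act) : Prov Φ (.eq x (.meet x x)) :=
  eq_trans' (eq_symm' (prov_ax (Ax.meetOne x)))
    (eq_trans' (meet_congr_r x (eq_symm' (prov_ax (Ax.joinCompl x))))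
      (eq_trans' (prov_ax (Ax.meetDistrib x x (.compl x)))
        (eq_trans' (join_congr_r (.meet x x) (prov_ax (Ax.meetCompl x)))
          (prov_ax (Ax.joinZero (.meet x x))))))

lemma idem_join (x : Act) : Prov Φ (.eq x (.join x x)) :=
  eq_trans' (eq_symm' (prov_ax (Ax.joinZero x)))
    (eq_trans' (join_congr_r x (eq_symm' (prov_ax (Ax.meetCompl x))))
      (eq_trans' (prov_ax (Ax.joinDistrib x x (.compl x)))
        (eq_trans' (meet_congr_r (.join x x) (prov_ax (Ax.joinCompl x)))
          (prov_ax (Ax.meetOne (.join x x))))))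

lemma join_one (x : Act) : Prov Φ (.eq (.join x .one) .one) :=
  eq_trans' (join_congr_r x (eq_symm' (prov_ax (Ax.joinCompl x))))
    (eq_trans' (prov_ax (Ax.joinAssoc x x (.compl x)))
      (eq_trans' (join_congr_l (.compl x) (eq_symm' (idem_join x)))
        (prov_ax (Ax.joinCompl x))))

lemma one_join (x : Act) : Prov Φ (.eq (.join .one x) .one) :=
  eq_trans' (prov_ax (Ax.joinComm .one x)) (join_one x)

lemma meet_zero (x : Act) : Prov Φ (.eq (.meet x .zero) .zero) :=
  eq_trans' (meet_congr_r x (eq_symm' (prov_ax (Ax.meetCompl x))))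
    (eq_trans' (prov_ax (Ax.meetAssoc x x (.compl x)))
      (eq_trans' (meet_congr_l (.compl x) (eq_symm' (idem_meet x)))
        (prov_ax (Ax.meetCompl x))))

lemma absorb (x y : Act) : Prov Φ (.eq (.join x (.meet x y)) x) :=
  eq_trans' (join_congr_l (.meet x y) (eq_symm' (prov_ax (Ax.meetOne x))))
    (eq_trans' (eq_symm' (prov_ax (Ax.meetDistrib x .one y)))
      (eq_trans' (meet_congr_r x (one_join y)) (prov_ax (Ax.meetOne x))))

/-! ### Lemmas about the Boolean order -/

lemma leLT_refl (x : Act) : leLT Φ x x := idem_meet x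

lemma leLT_congr_left {α β γ : Act} (hab : Prov Φ (.eq α β)) (h : leLT Φ α γ) :
    leLT Φ β γ :=
  eq_trans' (eq_symm' hab) (eq_trans' h (meet_congr_l γ hab))

lemma leLT_sup_left {α γ₁ : Act} (γ₂ : Act) (h : leLT Φ α γ₁) : leLT Φ α (.join γ₁ γ₂) :=
  eq_symm' (eq_trans' (prov_ax (Ax.meetDistrib α γ₁ γ₂))
    (eq_trans' (join_congr_l (.meet α γ₂) (eq_symm' h)) (absorb α γ₂)))

lemma leLT_sup_right (γ₁ : Act) {α γ₂ : Act} (h : leLT Φ α γ₂) : leLT Φ α (.join γ₁ γ₂) :=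
  eq_trans' (leLT_sup_left γ₁ h) (meet_congr_r α (prov_ax (Ax.joinComm γ₂ γ₁)))

lemma leLT_sup {α β γ : Act} (h1 : leLT Φ α γ) (h2 : leLT Φ β γ) :
    leLT Φ (.join α β) γ :=
  eq_symm' (eq_trans' (prov_ax (Ax.meetComm (.join α β) γ))
    (eq_trans' (prov_ax (Ax.meetDistrib γ α β))
      (eq_trans' (join_congr_l (.meet γ β) (prov_ax (Ax.meetComm γ α)))
        (eq_trans' (join_congr_r (.meet α γ) (prov_ax (Ax.meetComm γ β)))
          (eq_trans' (join_congr_l (.meet β γ) (eq_symm' h1))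
            (join_congr_r α (eq_symm' h2)))))))

lemma leLT_meet_left {α γ : Act} (β : Act) (h : leLT Φ α γ) : leLT Φ (.meet α β) γ :=
  eq_trans' (meet_congr_l β h)
    (eq_trans' (eq_symm' (prov_ax (Ax.meetAssoc α γ β)))
      (eq_trans' (meet_congr_r α (prov_ax (Ax.meetComm γ β))) (prov_ax (Ax.meetAssoc α β γ))))

lemma leLT_inf {α γ δ : Act} (h1 : leLT Φ α γ) (h2 : leLT Φ α δ) :
    leLT Φ α (.meet γ δ) :=
  eq_trans' h1
    (eq_trans' (meet_congr_l γ h2)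
      (eq_trans' (eq_symm' (prov_ax (Ax.meetAssoc α δ γ)))
        (meet_congr_r α (prov_ax (Ax.meetComm δ γ)))))

lemma inf_leLT_left (γ δ : Act) : leLT Φ (.meet γ δ) γ :=
  eq_trans' (meet_congr_l δ (idem_meet γ))
    (eq_trans' (eq_symm' (prov_ax (Ax.meetAssoc γ γ δ)))
      (prov_ax (Ax.meetComm γ (.meet γ δ))))

lemma inf_leLT_right (γ δ : Act) : leLT Φ (.meet γ δ) δ :=
  eq_trans' (meet_congr_r γ (idem_meet δ)) (prov_ax (Ax.meetAssoc γ δ δ))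

lemma eq_zero_of_leLT_zero {α : Act} (h : leLT Φ α .zero) : Prov Φ (.eq α .zero) :=
  eq_trans' h (meet_zero α)

/-! ### Deontic lemmas -/

lemma perm_congr {x y : Act} (h : Prov Φ (.eq x y)) (hp : Prov Φ (.perm x)) :
    Prov Φ (.perm y) :=
  prov_subst (.perm .repl) h hp

lemma forb_congr {x y : Act} (h : Prov Φ (.eq x y)) (hp : Prov Φ (.forb x)) :
    Prov Φ (.forb y) :=
  prov_subst (.forb .repl) h hp

lemma perm_of_eq_zero {x : Act} (h : Prov Φ (.eq x .zero)) : Prov Φ (.perm x) :=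
  prov_and_left (prov_iff_mp (prov_ax (Ax.d3 x)) h)

lemma forb_of_eq_zero {x : Act} (h : Prov Φ (.eq x .zero)) : Prov Φ (.forb x) :=
  prov_and_right (prov_iff_mp (prov_ax (Ax.d3 x)) h)

lemma eq_zero_of_perm_forb {x : Act} (hp : Prov Φ (.perm x)) (hf : Prov Φ (.forb x)) :
    Prov Φ (.eq x .zero) :=
  prov_iff_mpr (prov_ax (Ax.d3 x)) (prov_and_intro hp hf)

lemma perm_join {x y : Act} (h1 : Prov Φ (.perm x)) (h2 : Prov Φ (.perm y)) :
    Prov Φ (.perm (.join x y)) :=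
  prov_iff_mpr (prov_ax (Ax.d1 x y)) (prov_and_intro h1 h2)

lemma forb_join {x y : Act} (h1 : Prov Φ (.forb x)) (h2 : Prov Φ (.forb y)) :
    Prov Φ (.forb (.join x y)) :=
  prov_iff_mpr (prov_ax (Ax.d2 x y)) (prov_and_intro h1 h2)

lemma join_eq_of_leLT {β γ : Act} (h : leLT Φ β γ) : Prov Φ (.eq (.join γ β) γ) :=
  eq_trans' (join_congr_r γ h)
    (eq_trans' (join_congr_r γ (prov_ax (Ax.meetComm β γ))) (absorb γ β))

lemma perm_down {β γ : Act} (h : leLT Φ β γ) (hγ : Prov Φ (.perm γ)) :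
    Prov Φ (.perm β) :=
  prov_and_right (prov_iff_mp (prov_ax (Ax.d1 γ β))
    (perm_congr (eq_symm' (join_eq_of_leLT h)) hγ))

lemma forb_down {β γ : Act} (h : leLT Φ β γ) (hγ : Prov Φ (.forb γ)) :
    Prov Φ (.forb β) :=
  prov_and_right (prov_iff_mp (prov_ax (Ax.d2 γ β))
    (forb_congr (eq_symm' (join_eq_of_leLT h)) hγ))

/-! ### Ideal lemmas -/

lemma isIdealLT_sInter {S : Set (Set Act)} (h : ∀ I ∈ S, IsIdealLT Φ I) :
    IsIdealLT Φ (⋂₀ S) :=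
  ⟨fun α β hab hα I hI => (h I hI).1 α β hab (hα I hI),
   fun α hα β hβ I hI => (h I hI).2.1 α (hα I hI) β (hβ I hI),
   fun α hα β I hI => (h I hI).2.2 α (hα I hI) β⟩

lemma subset_genIdealLT {B : Set Act} : B ⊆ genIdealLT Φ B :=
  fun _ hx I hI => hI.2 hx

lemma isIdealLT_genIdealLT {B : Set Act} : IsIdealLT Φ (genIdealLT Φ B) :=
  isIdealLT_sInter fun _ hI => hI.1

lemma isIdealLT_PIdeal : IsIdealLT Φ (PIdeal Φ) :=
  isIdealLT_sInter fun _ hI => hI.1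

lemma isIdealLT_FIdeal : IsIdealLT Φ (FIdeal Φ) :=
  isIdealLT_sInter fun _ hI => hI.1

lemma mem_PIdeal_of_perm {α : Act} (h : Prov Φ (.perm α)) : α ∈ PIdeal Φ :=
  fun I hI => hI.2 α h

lemma mem_FIdeal_of_forb {α : Act} (h : Prov Φ (.forb α)) : α ∈ FIdeal Φ :=
  fun I hI => hI.2 α h

lemma PIdeal_min {I : Set Act} (h1 : IsIdealLT Φ I)
    (h2 : ∀ α : Act, Prov Φ (.perm α) → α ∈ I) : PIdeal Φ ⊆ I :=
  fun _ hx => hx I ⟨h1, h2⟩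

lemma FIdeal_min {I : Set Act} (h1 : IsIdealLT Φ I)
    (h2 : ∀ α : Act, Prov Φ (.forb α) → α ∈ I) : FIdeal Φ ⊆ I :=
  fun _ hx => hx I ⟨h1, h2⟩

/-- The downward closure of the provably permitted actions. -/
def permDown (Φ : Set Fml) : Set Act := {α | ∃ γ, Prov Φ (.perm γ) ∧ leLT Φ α γ}

/-- The downward closure of the provably forbidden actions. -/
def forbDown (Φ : Set Fml) : Set Act := {α | ∃ γ, Prov Φ (.forb γ) ∧ leLT Φ α γ}

lemma isIdealLT_permDown : IsIdealLT Φ (permDown Φ) := by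
  refine ⟨?_, ?_, ?_⟩
  · rintro α β hab ⟨γ, hγ, hle⟩
    exact ⟨γ, hγ, leLT_congr_left hab hle⟩
  · rintro α ⟨γ₁, hγ₁, h1⟩ β ⟨γ₂, hγ₂, h2⟩
    exact ⟨.join γ₁ γ₂, perm_join hγ₁ hγ₂, leLT_sup (leLT_sup_left γ₂ h1) (leLT_sup_right γ₁ h2)⟩
  · rintro α ⟨γ, hγ, hle⟩ β
    exact ⟨γ, hγ, leLT_meet_left β hle⟩

lemma isIdealLT_forbDown : IsIdealLT Φ (forbDown Φ) := by
  refine ⟨?_, ?_, ?_⟩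
  · rintro α β hab ⟨γ, hγ, hle⟩
    exact ⟨γ, hγ, leLT_congr_left hab hle⟩
  · rintro α ⟨γ₁, hγ₁, h1⟩ β ⟨γ₂, hγ₂, h2⟩
    exact ⟨.join γ₁ γ₂, forb_join hγ₁ hγ₂, leLT_sup (leLT_sup_left γ₂ h1) (leLT_sup_right γ₁ h2)⟩
  · rintro α ⟨γ, hγ, hle⟩ β
    exact ⟨γ, hγ, leLT_meet_left β hle⟩

lemma permDown_inter_forbDown : permDown Φ ∩ forbDown Φ = zeroClass Φ := by
  apply Set.Subset.antisymm
  · rintro α ⟨⟨γ, hγ, h1⟩, ⟨δ, hδ, h2⟩⟩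
    have hp : Prov Φ (.perm (.meet γ δ)) := perm_down (inf_leLT_left γ δ) hγ
    have hf : Prov Φ (.forb (.meet γ δ)) := forb_down (inf_leLT_right γ δ) hδ
    have h0 : Prov Φ (.eq (.meet γ δ) .zero) := eq_zero_of_perm_forb hp hf
    have hle : leLT Φ α (.meet γ δ) := leLT_inf h1 h2
    exact eq_zero_of_leLT_zero (eq_trans' hle (meet_congr_r α h0))
  · intro α hα
    exact ⟨⟨α, perm_of_eq_zero hα, leLT_refl α⟩, ⟨α, forb_of_eq_zero hα, leLT_refl α⟩⟩

/-! ### The key Zorn argument -/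

/-- The family of "good pairs" used in the Zorn argument. -/
def GoodPairs (Φ : Set Fml) : Set (Set Act × Set Act) :=
  {qg | IsIdealLT Φ qg.1 ∧ IsIdealLT Φ qg.2 ∧ PIdeal Φ ⊆ qg.1 ∧ FIdeal Φ ⊆ qg.2 ∧
    qg.1 ∩ qg.2 = zeroClass Φ}

lemma exists_maximal_goodPair :
    ∃ m ∈ GoodPairs Φ, ∀ z ∈ GoodPairs Φ, m ≤ z → z = m := by
  have hbase : (permDown Φ, forbDown Φ) ∈ GoodPairs Φ := by
    refine ⟨isIdealLT_permDown, isIdealLT_forbDown, ?_, ?_, permDown_inter_forbDown⟩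
    · exact PIdeal_min isIdealLT_permDown fun α h => ⟨α, h, leLT_refl α⟩
    · exact FIdeal_min isIdealLT_forbDown fun α h => ⟨α, h, leLT_refl α⟩
  have ih : ∀ c ⊆ GoodPairs Φ, IsChain (· ≤ ·) c → ∀ y ∈ c,
      ∃ ub ∈ GoodPairs Φ, ∀ z ∈ c, z ≤ ub := by
    intro c hcs hc y hy
    refine ⟨(⋃ z ∈ c, z.1, ⋃ z ∈ c, z.2), ?_, ?_⟩
    · have hmem1 : ∀ x : Act, x ∈ (⋃ z ∈ c, z.1) ↔ ∃ z ∈ c, x ∈ z.1 := by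
        intro x; simp
      have hmem2 : ∀ x : Act, x ∈ (⋃ z ∈ c, z.2) ↔ ∃ z ∈ c, x ∈ z.2 := by
        intro x; simp
      refine ⟨⟨?_, ?_, ?_⟩, ⟨?_, ?_, ?_⟩, ?_, ?_, ?_⟩
      · intro α β hab hα
        rw [hmem1] at hα ⊢
        obtain ⟨z, hz, hαz⟩ := hα
        exact ⟨z, hz, (hcs hz).1.1 α β hab hαz⟩
      · intro α hα β hβ
        rw [hmem1] at hα hβ ⊢
        obtain ⟨z, hz, hαz⟩ := hα
        obtain ⟨w, hw, hβw⟩ := hβ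
        rcases hc.total hz hw with hzw | hwz
        · exact ⟨w, hw, (hcs hw).1.2.1 α (hzw.1 hαz) β hβw⟩
        · exact ⟨z, hz, (hcs hz).1.2.1 α hαz β (hwz.1 hβw)⟩
      · intro α hα β
        rw [hmem1] at hα ⊢
        obtain ⟨z, hz, hαz⟩ := hα
        exact ⟨z, hz, (hcs hz).1.2.2 α hαz β⟩
      · intro α β hab hα
        rw [hmem2] at hα ⊢
        obtain ⟨z, hz, hαz⟩ := hα
        exact ⟨z, hz, (hcs hz).2.1.1 α β hab hαz⟩
      · intro α hα β hβ
        rw [hmem2] at hα hβ ⊢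
        obtain ⟨z, hz, hαz⟩ := hα
        obtain ⟨w, hw, hβw⟩ := hβ
        rcases hc.total hz hw with hzw | hwz
        · exact ⟨w, hw, (hcs hw).2.1.2.1 α (hzw.2 hαz) β hβw⟩
        · exact ⟨z, hz, (hcs hz).2.1.2.1 α hαz β (hwz.2 hβw)⟩
      · intro α hα β
        rw [hmem2] at hα ⊢
        obtain ⟨z, hz, hαz⟩ := hα
        exact ⟨z, hz, (hcs hz).2.1.2.2 α hαz β⟩
      · intro x hx
        rw [hmem1]
        exact ⟨y, hy, (hcs hy).2.2.1 hx⟩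
      · intro x hx
        rw [hmem2]
        exact ⟨y, hy, (hcs hy).2.2.2.1 hx⟩
      · apply Set.Subset.antisymm
        · rintro x ⟨hx1, hx2⟩
          rw [hmem1] at hx1
          rw [hmem2] at hx2
          obtain ⟨z, hz, hxz⟩ := hx1
          obtain ⟨w, hw, hxw⟩ := hx2
          rcases hc.total hz hw with hzw | hwz
          · rw [← (hcs hw).2.2.2.2]
            exact ⟨hzw.1 hxz, hxw⟩
          · rw [← (hcs hz).2.2.2.2]
            exact ⟨hxz, hwz.2 hxw⟩
        · intro x hx
          constructor
          · rw [hmem1]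
            exact ⟨y, hy, (hcs hy).2.2.1 (mem_PIdeal_of_perm (perm_of_eq_zero hx))⟩
          · rw [hmem2]
            exact ⟨y, hy, (hcs hy).2.2.2.1 (mem_FIdeal_of_forb (forb_of_eq_zero hx))⟩
    · intro z hz
      exact ⟨Set.subset_biUnion_of_mem (u := fun z => z.1) hz,
        Set.subset_biUnion_of_mem (u := fun z => z.2) hz⟩
  obtain ⟨m, _, hm⟩ := zorn_le_nonempty₀ (GoodPairs Φ) ih _ hbase
  exact ⟨m, hm.1, fun z hz hle => le_antisymm (hm.2 hz hle) hle⟩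

end DAL

/-- Algebraic extensions yield deontic action algebras: if Φ is
⊢-consistent, Δ is a set of basic deontic defaults, and (P, F) is an algebraic
extension of Φ under Δ, then ⟨A_Φ, P, F⟩ is a deontic action algebra: P and F are
ideals of the nondegenerate Boolean algebra A_Φ and P ∩ F = {[0]_Φ}. -/
theorem DAL.algebraic_extension_is_daa (Φ : Set DAL.Fml) (hΦ : DAL.Consistent Φ)
    (Δ : Set DAL.Default) (hΔ : DAL.BasicDeonticSet Δ)
    (P F : Set DAL.Act) (hPF : DAL.AlgExt Φ Δ P F) :
    DAL.IsIdealLT Φ P ∧ DAL.IsIdealLT Φ F ∧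
    P ∩ F = DAL.zeroClass Φ ∧
    ¬ DAL.Prov Φ (DAL.Fml.eq DAL.Act.zero DAL.Act.one) := by
  obtain ⟨hE, hmin⟩ := hPF
  obtain ⟨hPI, hFI, hPsub, hFsub, -, -⟩ := hE
  have notdeg : ¬ DAL.Prov Φ (DAL.Fml.eq DAL.Act.zero DAL.Act.one) :=
    fun h => hΦ (DAL.prov_bot h (DAL.prov_ax DAL.Ax.nondeg))
  refine ⟨hPI, hFI, ?_, notdeg⟩
  obtain ⟨m, hmG, hmax⟩ := DAL.exists_maximal_goodPair (Φ := Φ)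
  obtain ⟨hmP, hmF, hmPI, hmFI, hmint⟩ := hmG
  have hEm : DAL.EConds Φ Δ m.1 m.2 := by
    refine ⟨hmP, hmF, hmPI, hmFI, ?_, ?_⟩
    · intro α β _ _ hguard _
      have hQ' : (DAL.genIdealLT Φ (m.1 ∪ {β}), m.2) ∈ DAL.GoodPairs Φ := by
        refine ⟨DAL.isIdealLT_genIdealLT, hmF, ?_, hmFI, hguard⟩
        exact hmPI.trans (Set.subset_union_left.trans DAL.subset_genIdealLT)
      have hle : m ≤ (DAL.genIdealLT Φ (m.1 ∪ {β}), m.2) :=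
        ⟨Set.subset_union_left.trans DAL.subset_genIdealLT, le_refl _⟩
      have heq := hmax _ hQ' hle
      have hβ : β ∈ DAL.genIdealLT Φ (m.1 ∪ {β}) :=
        DAL.subset_genIdealLT (Or.inr rfl)
      have h1 : DAL.genIdealLT Φ (m.1 ∪ {β}) = m.1 := congrArg Prod.fst heq
      exact h1 ▸ hβ
    · intro α β _ _ hguard _
      have hint : DAL.genIdealLT Φ (m.2 ∪ {β}) ∩ m.1 = DAL.zeroClass Φ := hguard
      have hint' : m.1 ∩ DAL.genIdealLT Φ (m.2 ∪ {β}) = DAL.zeroClass Φ := by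
        rw [Set.inter_comm]; exact hint
      have hQ' : (m.1, DAL.genIdealLT Φ (m.2 ∪ {β})) ∈ DAL.GoodPairs Φ := by
        refine ⟨hmP, DAL.isIdealLT_genIdealLT, hmPI, ?_, hint'⟩
        exact hmFI.trans (Set.subset_union_left.trans DAL.subset_genIdealLT)
      have hle : m ≤ (m.1, DAL.genIdealLT Φ (m.2 ∪ {β})) :=
        ⟨le_refl _, Set.subset_union_left.trans DAL.subset_genIdealLT⟩
      have heq := hmax _ hQ' hle
      have hβ : β ∈ DAL.genIdealLT Φ (m.2 ∪ {β}) :=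
        DAL.subset_genIdealLT (Or.inr rfl)
      have h2 : DAL.genIdealLT Φ (m.2 ∪ {β}) = m.2 := congrArg Prod.snd heq
      exact h2 ▸ hβ
  obtain ⟨hPm, hFm⟩ := hmin m.1 m.2 hEm
  apply Set.Subset.antisymm
  · intro x hx
    rw [← hmint]
    exact ⟨hPm hx.1, hFm hx.2⟩
  · intro x hx
    exact ⟨hPsub (DAL.mem_PIdeal_of_perm (DAL.perm_of_eq_zero hx)),
      hFsub (DAL.mem_FIdeal_of_forb (DAL.forb_of_eq_zero hx))⟩
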